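/- Let M be an additive commutative monoid, let r ≥ 1, and let t_1,…,t_r ∈ M. Define multisets of lists Q_1 := {[t_1]} and Q_{m+1} := Q_m.bind (λ α, qs α [t_{m+1}]) for 1 ≤ m < r (the iterated quasi-shuffle product of the one-letter words [t_1],…,[t_r]). Then Q_r = ∑_{i=1}^{r} ∑_{σ ∈ 𝒫(r,i)} {[t_{σ⁻¹(1)},…,t_{σ⁻¹(i)}]} as multisets of lists with entries in M. -/

import Mathlib

open scoped BigOperators

/-- The quasi-shuffle (harmonic) product of two words. -/
def qs {M : Type*} [AddCommMonoid M] : List M → List M → Multiset (List M)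
  | [], w => {w}
  | a :: u, [] => {a :: u}
  | a :: u, b :: v =>
      (qs u (b :: v)).map (a :: ·) + (qs (a :: u) v).map (b :: ·) +
        (qs u v).map (fun w => (a + b) :: w)
termination_by u v => u.length + v.length
decreasing_by all_goals (simp; try omega)

/-- `𝒫 r i`: surjections from `Fin r` onto `Fin i`. -/
def Psurj (r i : ℕ) : Finset (Fin r → Fin i) :=
  Finset.univ.filter Function.Surjective

/-- The word `[t_{σ⁻¹(1)}, …, t_{σ⁻¹(i)}]`. -/
def wordOf {M : Type*} [AddCommMonoid M] {r i : ℕ} (t : Fin r → M) (σ : Fin r → Fin i) :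
    List M :=
  List.ofFn fun k : Fin i => ∑ n ∈ Finset.univ.filter (fun n => σ n = k), t n



namespace IterQSAux

variable {M : Type*} [AddCommMonoid M] {n : ℕ}

lemma qs_nil_right : ∀ w : List M, qs w [] = {w}
  | [] => by simp [qs]
  | a :: u => by simp [qs]

lemma qs_cons_single (a b : M) (u : List M) :
    qs (a :: u) [b] = (qs u [b]).map (a :: ·) + ({b :: a :: u} : Multiset (List M)) + {(a + b) :: u} := by
  rw [qs, qs_nil_right, qs_nil_right]; simp

lemma insertNth_succ (k : Fin (n+1)) (b : M) (f : Fin (n+1) → M) :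
    Fin.insertNth k.succ b f = Fin.cons (α := fun _ => M) (f 0) (Fin.insertNth (α := fun _ => M) k b (fun j => f j.succ)) := by
  funext j
  induction j using Fin.cases with
  | zero =>
      have h0 : (0 : Fin (n+2)) = k.succ.succAbove 0 := by
        rw [Fin.succAbove_of_castSucc_lt]
        · simp
        · simp [Fin.succ_pos]
      rw [h0, Fin.insertNth_apply_succAbove]
      simp
  | succ m =>
      rw [Fin.cons_succ]
      by_cases hm : m = k
      · subst hm
        rw [show Fin.succ m = m.succ from rfl, Fin.insertNth_apply_same, Fin.insertNth_apply_same]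
      · obtain ⟨m', rfl⟩ := Fin.exists_succAbove_eq hm
        rw [← Fin.succ_succAbove_succ, Fin.insertNth_apply_succAbove, Fin.insertNth_apply_succAbove]

lemma update_succ (k : Fin n) (v : M) (f : Fin (n+1) → M) :
    Function.update f k.succ v = Fin.cons (α := fun _ => M) (f 0) (Function.update (fun j => f j.succ) k v) := by
  funext j
  induction j using Fin.cases with
  | zero => rw [Function.update_of_ne (Fin.succ_ne_zero k).symm, Fin.cons_zero]
  | succ m =>
      rw [Fin.cons_succ]
      by_cases hm : m = k
      · subst hm; rw [Function.update_self, Function.update_self]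
      · rw [Function.update_of_ne (fun h => hm (Fin.succ_injective _ h)),
          Function.update_of_ne hm]

lemma map_finset_sum {ι α β : Type*} (s : Finset ι) (g : ι → Multiset α) (h : α → β) :
    Multiset.map h (∑ x ∈ s, g x) = ∑ x ∈ s, Multiset.map h (g x) :=
  map_sum (Multiset.mapAddMonoidHom h) g s

lemma qs_ofFn : ∀ (i : ℕ) (f : Fin i → M) (b : M),
    qs (List.ofFn f) [b] =
      (∑ k : Fin (i+1), ({List.ofFn (Fin.insertNth (α := fun _ => M) k b f)} : Multiset (List M))) +
      ∑ k : Fin i, ({List.ofFn (Function.update f k (f k + b))} : Multiset (List M))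
  | 0, f, b => by
      have : List.ofFn f = [] := by simp
      rw [this]
      rw [show qs [] [b] = {[b]} from by simp [qs]]
      rw [Fin.sum_univ_one]
      simp [Fin.insertNth_zero']
  | (i+1), f, b => by
      rw [List.ofFn_succ, qs_cons_single, qs_ofFn i (fun j => f j.succ) b]
      rw [Fin.sum_univ_succ (f := fun k : Fin (i+2) => ({List.ofFn (Fin.insertNth (α := fun _ => M) k b f)} : Multiset (List M)))]
      rw [Fin.sum_univ_succ (f := fun k : Fin (i+1) => ({List.ofFn (Function.update f k (f k + b))} : Multiset (List M)))]
      simp only [Multiset.map_add, map_finset_sum, Multiset.map_singleton]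
      have h1 : ∀ k : Fin (i+1),
          f 0 :: List.ofFn (Fin.insertNth (α := fun _ => M) k b (fun j => f j.succ)) =
          List.ofFn (Fin.insertNth (α := fun _ => M) k.succ b f) := by
        intro k
        rw [insertNth_succ, List.ofFn_succ]
        simp [Fin.cons_zero, Fin.cons_succ]
      have h2 : ∀ k : Fin i,
          f 0 :: List.ofFn (Function.update (fun j => f j.succ) k (f k.succ + b)) =
          List.ofFn (Function.update f k.succ (f k.succ + b)) := by
        intro k
        rw [update_succ, List.ofFn_succ]
        simp [Fin.cons_zero, Fin.cons_succ]
      simp only [h1, h2]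
      have h3 : b :: f 0 :: List.ofFn (fun j => f j.succ) =
          List.ofFn (Fin.insertNth (α := fun _ => M) 0 b f) := by
        rw [Fin.insertNth_zero', List.ofFn_succ]
        simp [Fin.cons_zero, Fin.cons_succ]
      have h4 : (f 0 + b) :: List.ofFn (fun j => f j.succ) =
          List.ofFn (Function.update f 0 (f 0 + b)) := by
        rw [List.ofFn_succ (f := Function.update f 0 (f 0 + b))]
        simp [Function.update_of_ne, Fin.succ_ne_zero]
      rw [← h3, ← h4]
      abel

def fib {r i : ℕ} (t : Fin r → M) (σ : Fin r → Fin i) (k : Fin i) : M :=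
  ∑ n ∈ Finset.univ.filter (fun n => σ n = k), t n

lemma wordOf_eq {r i : ℕ} (t : Fin r → M) (σ : Fin r → Fin i) :
    wordOf t σ = List.ofFn (fib t σ) := rfl

lemma mem_Psurj {r i : ℕ} {σ : Fin r → Fin i} : σ ∈ Psurj r i ↔ Function.Surjective σ := by
  simp [Psurj]

lemma fib_snoc {r j : ℕ} (t : Fin (r+1) → M) (τ : Fin r → Fin j) (k : Fin j) (j' : Fin j) :
    fib t (Fin.snoc τ k) j' =
      fib (fun n => t n.castSucc) τ j' + (if k = j' then t (Fin.last r) else 0) := by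
  simp only [fib, Finset.sum_filter, Fin.sum_univ_castSucc, Fin.snoc_castSucc, Fin.snoc_last]

lemma fib_snoc_ins {r i : ℕ} (t : Fin (r+1) → M) (σ : Fin r → Fin i) (k : Fin (i+1)) :
    fib t (Fin.snoc (fun n => k.succAbove (σ n)) k) =
      Fin.insertNth (α := fun _ => M) k (t (Fin.last r)) (fib (fun n => t n.castSucc) σ) := by
  funext j'
  rw [fib_snoc]
  by_cases hj : j' = k
  · subst hj
    rw [Fin.insertNth_apply_same, if_pos rfl]
    have : fib (fun n => t n.castSucc) (fun n => j'.succAbove (σ n)) j' = 0 := by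
      rw [fib, Finset.sum_eq_zero]
      intro n hn
      simp only [Finset.mem_filter] at hn
      exact absurd hn.2 (Fin.succAbove_ne _ _)
    rw [this, zero_add]
  · obtain ⟨m, rfl⟩ := Fin.exists_succAbove_eq hj
    rw [Fin.insertNth_apply_succAbove, if_neg (fun h => hj h.symm), add_zero]
    unfold fib
    congr 1
    apply Finset.filter_congr
    intro n _
    simp [Fin.succAbove_right_injective.eq_iff]

lemma fib_snoc_upd {r i : ℕ} (t : Fin (r+1) → M) (σ : Fin r → Fin i) (k : Fin i) :
    fib t (Fin.snoc σ k) =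
      Function.update (fib (fun n => t n.castSucc) σ) k
        (fib (fun n => t n.castSucc) σ k + t (Fin.last r)) := by
  funext j'
  rw [fib_snoc]
  by_cases hj : j' = k
  · subst hj; rw [Function.update_self, if_pos rfl]
  · rw [Function.update_of_ne hj, if_neg (fun h => hj h.symm), add_zero]

open Function Finset

lemma snoc_comp_castSucc {r j : ℕ} (σ' : Fin (r+1) → Fin j) :
    Fin.snoc (α := fun _ => Fin j) (fun n => σ' n.castSucc) (σ' (Fin.last r)) = σ' := by
  funext m
  induction m using Fin.lastCases with
  | last => simp
  | cast n => simp

lemma getD_spec {j : ℕ} (k v : Fin (j+1)) (hv : v ≠ k) (d : Fin j) :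
    k.succAbove (((finSuccEquiv' k) v).getD d) = v := by
  cases h : finSuccEquiv' k v with
  | none =>
      exfalso
      apply hv
      have := congrArg (finSuccEquiv' k).symm h
      simpa [finSuccEquiv'_symm_none] using this
  | some m =>
      have := congrArg (finSuccEquiv' k).symm h
      rw [Equiv.symm_apply_apply, finSuccEquiv'_symm_some] at this
      simp [h, ← this]

lemma key_ne {r j : ℕ} (σ' : Fin (r+1) → Fin j) (hsurj : Surjective σ')
    (hns : ¬ Surjective (fun n : Fin r => σ' n.castSucc)) :
    ∀ n : Fin r, σ' n.castSucc ≠ σ' (Fin.last r) := by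
  intro n hn
  apply hns
  intro v
  obtain ⟨m, hm⟩ := hsurj v
  by_cases hml : m = Fin.last r
  · exact ⟨n, show σ' n.castSucc = v by rw [hn, ← hml, hm]⟩
  · obtain ⟨m', rfl⟩ := Fin.exists_castSucc_eq.2 hml
    exact ⟨m', hm⟩

lemma claimB {r : ℕ} (t : Fin (r+1) → M) (j : ℕ) :
    ∑ σ' ∈ (Psurj (r+1) j).filter
        (fun σ' => Surjective (fun n : Fin r => σ' n.castSucc)),
      ({wordOf t σ'} : Multiset (List M)) =
    ∑ σ ∈ Psurj r j, ∑ k : Fin j,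
      ({wordOf t (Fin.snoc σ k)} : Multiset (List M)) := by
  rw [← Finset.sum_product' (s := Psurj r j) (t := Finset.univ)
    (f := fun σ k => ({wordOf t (Fin.snoc σ k)} : Multiset (List M)))]
  refine Finset.sum_bij' (fun σ' _ => ((fun n => σ' n.castSucc), σ' (Fin.last r)))
    (fun p _ => Fin.snoc p.1 p.2) ?_ ?_ ?_ ?_ ?_
  · intro σ' hσ'
    rw [Finset.mem_filter] at hσ'
    exact Finset.mem_product.2 ⟨mem_Psurj.2 hσ'.2, Finset.mem_univ _⟩
  · rintro ⟨σ, k⟩ hp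
    rw [Finset.mem_product, mem_Psurj] at hp
    rw [Finset.mem_filter, mem_Psurj]
    constructor
    · intro v
      obtain ⟨n, hn⟩ := hp.1 v
      exact ⟨n.castSucc, by simp; exact hn⟩
    · have : (fun n : Fin r => (Fin.snoc (α := fun _ => Fin j) σ k) n.castSucc) = σ := by
        funext n; simp
      rw [this]
      exact hp.1
  · intro σ' _
    exact snoc_comp_castSucc σ'
  · rintro ⟨σ, k⟩ _
    refine Prod.ext ?_ ?_
    · funext n; simp
    · simp
  · intro σ' _
    rw [snoc_comp_castSucc]

lemma claimA {r i : ℕ} (hi1 : 1 ≤ i) (t : Fin (r+1) → M) :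
    ∑ σ' ∈ (Psurj (r+1) (i+1)).filter
        (fun σ' => ¬ Surjective (fun n : Fin r => σ' n.castSucc)),
      ({wordOf t σ'} : Multiset (List M)) =
    ∑ σ ∈ Psurj r i, ∑ k : Fin (i+1),
      ({wordOf t (Fin.snoc (fun n => k.succAbove (σ n)) k)} : Multiset (List M)) := by
  have d : Fin i := ⟨0, hi1⟩
  rw [← Finset.sum_product' (s := Psurj r i) (t := Finset.univ)
    (f := fun σ k => ({wordOf t (Fin.snoc (fun n => k.succAbove (σ n)) k)} : Multiset (List M)))]
  refine Finset.sum_bij'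
    (fun σ' _ => ((fun n : Fin r =>
        ((finSuccEquiv' (σ' (Fin.last r))) (σ' n.castSucc)).getD d), σ' (Fin.last r)))
    (fun p _ => Fin.snoc (fun n => p.2.succAbove (p.1 n)) p.2) ?_ ?_ ?_ ?_ ?_
  · -- maps into product
    intro σ' hσ'
    rw [Finset.mem_filter, mem_Psurj] at hσ'
    obtain ⟨hsurj, hns⟩ := hσ'
    refine Finset.mem_product.2 ⟨mem_Psurj.2 ?_, Finset.mem_univ _⟩
    intro m
    set k := σ' (Fin.last r) with hk
    obtain ⟨x, hx⟩ := hsurj (k.succAbove m)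
    have hxl : x ≠ Fin.last r := by
      intro h
      rw [h, ← hk] at hx
      exact Fin.succAbove_ne k m hx.symm
    obtain ⟨n, rfl⟩ := Fin.exists_castSucc_eq.2 hxl
    refine ⟨n, ?_⟩
    show ((finSuccEquiv' k) (σ' n.castSucc)).getD d = m
    rw [hx, finSuccEquiv'_succAbove]
    rfl
  · -- snoc lands in filter
    rintro ⟨σ, k⟩ hp
    rw [Finset.mem_product, mem_Psurj] at hp
    rw [Finset.mem_filter, mem_Psurj]
    refine ⟨?_, ?_⟩
    · intro v
      by_cases hv : v = k
      · exact ⟨Fin.last r, by simp [hv]⟩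
      · obtain ⟨m, rfl⟩ := Fin.exists_succAbove_eq hv
        obtain ⟨n, hn⟩ := hp.1 m
        refine ⟨n.castSucc, ?_⟩
        show Fin.snoc (α := fun _ => Fin (i+1)) (fun n => k.succAbove (σ n)) k n.castSucc
          = k.succAbove m
        rw [Fin.snoc_castSucc]
        exact congrArg k.succAbove hn
    · intro hsurj
      obtain ⟨n, hn⟩ := hsurj k
      revert hn
      show ¬ (Fin.snoc (α := fun _ => Fin (i+1)) (fun n => k.succAbove (σ n)) k n.castSucc = k)
      rw [Fin.snoc_castSucc]
      exact Fin.succAbove_ne k (σ n)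
  · -- left inverse
    intro σ' hσ'
    rw [Finset.mem_filter, mem_Psurj] at hσ'
    obtain ⟨hsurj, hns⟩ := hσ'
    show Fin.snoc (α := fun _ => Fin (i+1)) (fun n => (σ' (Fin.last r)).succAbove
        (((finSuccEquiv' (σ' (Fin.last r))) (σ' n.castSucc)).getD d)) (σ' (Fin.last r)) = σ'
    funext m
    induction m using Fin.lastCases with
    | last => rw [Fin.snoc_last]
    | cast n =>
        rw [Fin.snoc_castSucc]
        exact getD_spec _ _ (key_ne σ' hsurj hns n) d
  · -- right inverse
    rintro ⟨σ, k⟩ _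
    refine Prod.ext ?_ ?_
    · show (fun n : Fin r => _) = σ
      funext n
      show ((finSuccEquiv' (Fin.snoc (α := fun _ => Fin (i+1))
          (fun n => k.succAbove (σ n)) k (Fin.last r)))
          ((Fin.snoc (α := fun _ => Fin (i+1)) (fun n => k.succAbove (σ n)) k) n.castSucc)).getD d
        = σ n
      rw [Fin.snoc_last, Fin.snoc_castSucc, finSuccEquiv'_succAbove]
      rfl
    · simp
  · -- values
    intro σ' hσ'
    rw [Finset.mem_filter, mem_Psurj] at hσ'
    obtain ⟨hsurj, hns⟩ := hσ'
    show ({wordOf t σ'} : Multiset (List M)) =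
      {wordOf t (Fin.snoc (α := fun _ => Fin (i+1)) (fun n => (σ' (Fin.last r)).succAbove
        (((finSuccEquiv' (σ' (Fin.last r))) (σ' n.castSucc)).getD d)) (σ' (Fin.last r)))}
    congr 2
    funext m
    induction m using Fin.lastCases with
    | last => rw [Fin.snoc_last]
    | cast n =>
        rw [Fin.snoc_castSucc]
        exact (getD_spec _ _ (key_ne σ' hsurj hns n) d).symm

lemma F_step {r : ℕ} (hr : 1 ≤ r) (t : Fin (r+1) → M) :
    (∑ j ∈ Finset.Icc 1 (r+1), ∑ σ' ∈ Psurj (r+1) j, ({wordOf t σ'} : Multiset (List M))) =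
    ∑ i ∈ Finset.Icc 1 r, ∑ σ ∈ Psurj r i,
      qs (wordOf (fun n => t n.castSucc) σ) [t (Fin.last r)] := by
  classical
  have hq : ∀ (i : ℕ) (σ : Fin r → Fin i),
      qs (wordOf (fun n => t n.castSucc) σ) [t (Fin.last r)] =
      (∑ k : Fin (i+1),
        ({wordOf t (Fin.snoc (fun n => k.succAbove (σ n)) k)} : Multiset (List M))) +
      ∑ k : Fin i, ({wordOf t (Fin.snoc σ k)} : Multiset (List M)) := by
    intro i σ
    rw [wordOf_eq, qs_ofFn]
    congr 1
    · exact Finset.sum_congr rfl fun k _ => by rw [wordOf_eq, fib_snoc_ins]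
    · exact Finset.sum_congr rfl fun k _ => by rw [wordOf_eq, fib_snoc_upd]
  rw [Finset.sum_congr rfl (fun i _ => Finset.sum_congr rfl (fun σ _ => hq i σ)),
    Finset.sum_congr rfl (fun i _ => Finset.sum_add_distrib), Finset.sum_add_distrib]
  rw [Finset.sum_congr rfl (fun j _ =>
    (Finset.sum_filter_add_sum_filter_not (Psurj (r+1) j)
      (fun σ' => Surjective (fun n : Fin r => σ' n.castSucc))
      (fun σ' => ({wordOf t σ'} : Multiset (List M)))).symm), Finset.sum_add_distrib]
  rw [add_comm]
  congr 1
  · -- non-surjective part = insertion part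
    have hmap : Finset.Icc 1 (r+1)
        = Finset.map ⟨fun n => n+1, add_left_injective 1⟩ (Finset.Icc 0 r) := by
      ext x
      simp only [Finset.mem_Icc, Finset.mem_map, Function.Embedding.coeFn_mk]
      constructor
      · intro h; exact ⟨x-1, by omega, by omega⟩
      · rintro ⟨y, hy, rfl⟩; omega
    rw [hmap, Finset.sum_map]
    simp only [Function.Embedding.coeFn_mk]
    rw [show Finset.Icc 0 r = insert 0 (Finset.Icc 1 r) from by ext x; simp; omega,
      Finset.sum_insert (by simp)]
    have h0 : ∑ σ' ∈ (Psurj (r+1) (0+1)).filter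
        (fun σ' => ¬ Surjective (fun n : Fin r => σ' n.castSucc)),
        ({wordOf t σ'} : Multiset (List M)) = 0 := by
      rw [Finset.filter_eq_empty_iff.2, Finset.sum_empty]
      intro σ' _
      simp only [not_not]
      intro v
      exact ⟨⟨0, hr⟩, Fin.ext (by omega)⟩
    rw [h0, zero_add]
    exact Finset.sum_congr rfl fun i hi => claimA (by simp at hi; omega) t
  · -- surjective part = update part
    rw [← Finset.sum_subset (show Finset.Icc 1 r ⊆ Finset.Icc 1 (r+1) from
        fun x hx => by simp at hx ⊢; omega) ?_]
    · exact Finset.sum_congr rfl fun j _ => claimB t j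
    · intro x hx hx'
      have hxr : x = r + 1 := by simp at hx hx'; omega
      subst hxr
      rw [Finset.filter_eq_empty_iff.2, Finset.sum_empty]
      intro σ' _
      intro hp
      have := Fintype.card_le_of_surjective _ hp
      simp at this

lemma bind_finset_sum {ι α β : Type*} (s : Finset ι) (g : ι → Multiset α)
    (f : α → Multiset β) :
    (∑ x ∈ s, g x).bind f = ∑ x ∈ s, (g x).bind f := by
  classical
  induction s using Finset.cons_induction with
  | empty => simp
  | cons a s ha ih => rw [Finset.sum_cons, Finset.sum_cons, Multiset.add_bind, ih]


end IterQSAux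

open IterQSAux in
/-- The iterated quasi-shuffle product of the one-letter words `[t₁],…,[t_r]` equals
`∑_{i=1}^r ∑_{σ ∈ 𝒫(r,i)} [t_{σ⁻¹(1)},…,t_{σ⁻¹(i)}]`. -/
theorem iterated_qs_eq_sum_surj {M : Type*} [AddCommMonoid M] (r : ℕ) (hr : 1 ≤ r)
    (t : Fin r → M) (Q : ℕ → Multiset (List M))
    (hQ1 : Q 1 = {[t ⟨0, hr⟩]})
    (hQsucc : ∀ m, 1 ≤ m → ∀ hm : m < r, Q (m + 1) = (Q m).bind fun α => qs α [t ⟨m, hm⟩]) :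
    Q r = ∑ i ∈ Finset.Icc 1 r, ∑ σ ∈ Psurj r i, ({wordOf t σ} : Multiset (List M)) := by
  suffices H : ∀ m (h1 : 1 ≤ m) (hm : m ≤ r), Q m = ∑ i ∈ Finset.Icc 1 m, ∑ σ ∈ Psurj m i,
      ({wordOf (fun n : Fin m => t (Fin.castLE hm n)) σ} : Multiset (List M)) by
    have h := H r hr le_rfl
    have ht : (fun n : Fin r => t (Fin.castLE le_rfl n)) = t :=
      funext fun n => congrArg t (Fin.ext rfl)
    rwa [ht] at h
  intro m h1m
  induction m, h1m using Nat.le_induction with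
  | base =>
      intro hm
      rw [hQ1]
      have hP : Psurj 1 1 = Finset.univ :=
        Finset.filter_true_of_mem fun f _ => fun v => ⟨0, Fin.ext (by omega)⟩
      rw [Finset.Icc_self, Finset.sum_singleton, hP, Finset.univ_unique,
        Finset.sum_singleton]
      congr 1
      rw [wordOf_eq]
      have : fib (fun n : Fin 1 => t (Fin.castLE hm n)) (default : Fin 1 → Fin 1) 0
          = t ⟨0, hr⟩ := by
        rw [fib]
        rw [Finset.filter_true_of_mem fun n _ => Fin.ext (by omega)]
        rw [Finset.univ_unique, Finset.sum_singleton]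
        exact congrArg t (Fin.ext rfl)
      rw [show List.ofFn (fib (fun n : Fin 1 => t (Fin.castLE hm n)) (default : Fin 1 → Fin 1))
          = [fib (fun n : Fin 1 => t (Fin.castLE hm n)) (default : Fin 1 → Fin 1) 0] from by
        simp [List.ofFn_succ], this]
  | succ n hn ih =>
      intro hm'
      have hnr : n < r := by omega
      have hnle : n ≤ r := by omega
      rw [hQsucc n hn hnr, ih hnle, bind_finset_sum]
      have hstep := F_step hn (fun k : Fin (n+1) => t (Fin.castLE hm' k))
      have ht1 : (fun k : Fin n => t (Fin.castLE hm' k.castSucc))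
          = (fun k : Fin n => t (Fin.castLE hnle k)) :=
        funext fun k => congrArg t (Fin.ext rfl)
      have ht2 : t (Fin.castLE hm' (Fin.last n)) = t ⟨n, hnr⟩ :=
        congrArg t (Fin.ext rfl)
      rw [ht1, ht2] at hstep
      rw [hstep]
      exact Finset.sum_congr rfl fun i _ => by
        rw [bind_finset_sum]
        exact Finset.sum_congr rfl fun σ _ => Multiset.singleton_bind _ _
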